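/- arXiv:1103.4878 — 3 statements merged into one kernel-verified Lean document; each statement's English description precedes it below -/
import Mathlib

section
/- Let p be a prime and γ ∈ ℤ_p \ ℤ (a p-adic integer that is not a rational integer, assumed algebraic over ℚ and non-Liouville). Then the sequence of p-adic absolute values of the Pochhammer products satisfies lim_{n→∞} |γ(γ+1)⋯(γ+n)|_p^{1/(n+1)} = p^{-1/(p-1)}. -/
set_option maxHeartbeats 1000000

open Filter Finset Nat

variable {p : ℕ} [hp : Fact p.Prime]

lemma aux_val_eq {v m : ℕ} (hm : m ≠ 0) (h1 : p ^ v ∣ m) (h2 : ¬ p ^ (v + 1) ∣ m) :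
    padicValNat p m = v := by
  have hv : v ≤ padicValNat p m := (padicValNat_dvd_iff_le hm).mp h1
  have hv' : ¬ (v + 1 ≤ padicValNat p m) := fun h => h2 ((padicValNat_dvd_iff_le hm).mpr h)
  omega

lemma aux_transfer {B : ℕ} {x y : ℤ} (hx : x ≠ 0) (hy : y ≠ 0)
    (hB : padicValNat p x.natAbs < B) (hdvd : ((p : ℤ) ^ B) ∣ (y - x)) :
    padicValNat p y.natAbs = padicValNat p x.natAbs := by
  set v := padicValNat p x.natAbs with hv
  have hx0 : x.natAbs ≠ 0 := Int.natAbs_ne_zero.mpr hx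
  have hy0 : y.natAbs ≠ 0 := Int.natAbs_ne_zero.mpr hy
  have h1 : (p : ℤ) ^ v ∣ x := by
    have h := pow_padicValNat_dvd (p := p) (n := x.natAbs)
    rw [← hv] at h
    have : ((p ^ v : ℕ) : ℤ) ∣ (x.natAbs : ℤ) := Int.natCast_dvd_natCast.mpr h
    rw [Int.dvd_natAbs] at this
    exact_mod_cast this
  have h2 : ¬ (p : ℤ) ^ (v + 1) ∣ x := by
    intro h
    have : (p ^ (v+1) : ℕ) ∣ x.natAbs := by
      rw [← Int.natCast_dvd_natCast, Int.dvd_natAbs]; exact_mod_cast h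
    exact pow_succ_padicValNat_not_dvd hx0 (by rwa [← hv])
  have hvB : v ≤ B := hB.le
  have hy1 : (p : ℤ) ^ v ∣ y := by
    have : y = x + (y - x) := by ring
    rw [this]
    exact dvd_add h1 (dvd_trans (pow_dvd_pow _ hvB) hdvd)
  have hy2 : ¬ (p : ℤ) ^ (v + 1) ∣ y := by
    intro h
    apply h2
    have : x = y - (y - x) := by ring
    rw [this]
    exact dvd_sub h (dvd_trans (pow_dvd_pow _ hB) hdvd)
  apply aux_val_eq hy0
  · rw [← Int.natCast_dvd_natCast, Int.dvd_natAbs]; exact_mod_cast hy1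
  · intro h
    apply hy2
    have : ((p ^ (v+1) : ℕ) : ℤ) ∣ (y.natAbs : ℤ) := Int.natCast_dvd_natCast.mpr h
    rw [Int.dvd_natAbs] at this; exact_mod_cast this

lemma aux_digitsum_le {m : ℕ} (hp2 : 2 ≤ p) :
    (Nat.digits p m).sum ≤ (p - 1) * (Nat.log p m + 1) := by
  rcases eq_or_ne m 0 with rfl | hm
  · simp
  · have hlen : (Nat.digits p m).length = Nat.log p m + 1 := Nat.digits_len p m hp2 hm
    calc (Nat.digits p m).sum ≤ (Nat.digits p m).length • (p - 1) := by
          apply List.sum_le_card_nsmul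
          intro x hx
          have := Nat.digits_lt_base hp2 hx
          omega
      _ = (p - 1) * (Nat.log p m + 1) := by rw [smul_eq_mul, hlen]; ring

lemma aux_telescope (c : ℕ) (hc : 0 < c) (n : ℕ) :
    padicValNat p ((c - 1)!) + ∑ k ∈ Finset.range (n + 1), padicValNat p (c + k)
      = padicValNat p ((c + n)!) := by
  induction n with
  | zero =>
    obtain ⟨d, rfl⟩ : ∃ d, c = d + 1 := ⟨c - 1, by omega⟩
    rw [show (0:ℕ) + 1 = 1 from rfl, Finset.sum_range_one, Nat.add_zero, Nat.add_sub_cancel,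
      Nat.factorial_succ, padicValNat.mul (by omega) (Nat.factorial_ne_zero _)]
    omega
  | succ n ih =>
    rw [show c + (n+1) = c + n + 1 by omega, Finset.sum_range_succ, ← add_assoc, ih,
      show c + (n+1) = c + n + 1 by omega, Nat.factorial_succ,
      padicValNat.mul (by omega) (Nat.factorial_ne_zero _)]
    omega

lemma aux_legendre (m : ℕ) :
    ((p : ℤ) - 1) * padicValNat p (m !) = (m : ℤ) - ((Nat.digits p m).sum : ℤ) := by
  have h := sub_one_mul_padicValNat_factorial (p := p) m
  have hs : (Nat.digits p m).sum ≤ m := Nat.digit_sum_le p m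
  have hp1 : 1 ≤ p := hp.out.one_lt.le
  have h2 : (p - 1) * padicValNat p (m !) + (Nat.digits p m).sum = m := by omega
  have h4 := congrArg (Nat.cast : ℕ → ℤ) h2
  rw [Nat.cast_add, Nat.cast_mul, Nat.cast_sub hp1, Nat.cast_one] at h4
  linarith

lemma aux_prod_val (s : Finset ℕ) (f : ℕ → ℤ) (hf : ∀ i ∈ s, f i ≠ 0) :
    padicValNat p (∏ i ∈ s, f i).natAbs = ∑ i ∈ s, padicValNat p (f i).natAbs := by
  induction s using Finset.cons_induction with
  | empty => simp
  | cons a s ha ih =>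
    rw [Finset.prod_cons, Finset.sum_cons, Int.natAbs_mul,
      padicValNat.mul (Int.natAbs_ne_zero.mpr (hf a (Finset.mem_cons_self a s)))
        (Int.natAbs_ne_zero.mpr ?_), ih (fun i hi => hf i (Finset.mem_cons_of_mem hi))]
    exact Finset.prod_ne_zero_iff.mpr fun i hi => hf i (Finset.mem_cons_of_mem hi)

lemma aux_key (a : ℤ) (b : ℕ) (hb : 0 < b) (hpb : ¬ p ∣ b)
    (hk : ∀ k : ℕ, a + (k : ℤ) * b ≠ 0) (n : ℕ) :
    |((p : ℤ) - 1) * (∑ k ∈ Finset.range (n + 1),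
        padicValNat p (a + (k : ℤ) * b).natAbs : ℕ) - (n + 1 : ℤ)|
      ≤ ((p : ℤ) - 1) * ((Nat.log p (a.natAbs + (n + 1) * b) : ℤ) + 4) := by
  have hp2 : 2 ≤ p := hp.out.two_le
  set M : ℕ := a.natAbs + (n + 1) * b with hM
  have hM0 : 0 < M := by positivity
  set B : ℕ := Nat.log p M + 1 with hB
  have hMB : M < p ^ B := Nat.lt_pow_succ_log_self hp.out.one_lt M
  haveI : NeZero (p ^ B) := ⟨pow_ne_zero _ hp.out.ne_zero⟩
  -- bound on valuations
  have hvb : ∀ k ≤ n, padicValNat p (a + (k : ℤ) * b).natAbs < B := by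
    intro k hkn
    have hne : (a + (k : ℤ) * b).natAbs ≠ 0 := Int.natAbs_ne_zero.mpr (hk k)
    have hle : (a + (k : ℤ) * b).natAbs < p ^ B := by
      have h1 : (a + (k : ℤ) * b).natAbs ≤ a.natAbs + ((k : ℤ) * b).natAbs :=
        Int.natAbs_add_le _ _
      have h2 : ((k : ℤ) * b).natAbs = k * b := by
        rw [Int.natAbs_mul]; simp
      have : (a + (k : ℤ) * b).natAbs < M := by
        rw [hM]; have : k * b < (n + 1) * b := by
          apply Nat.mul_lt_mul_of_lt_of_le (by omega) le_rfl
          omega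
        omega
      omega
    have hdvd : p ^ padicValNat p (a + (k : ℤ) * b).natAbs ≤ (a + (k : ℤ) * b).natAbs :=
      Nat.le_of_dvd (by omega) pow_padicValNat_dvd
    have := lt_of_le_of_lt hdvd hle
    exact (Nat.pow_lt_pow_iff_right hp.out.one_lt).mp this
  -- the integer c
  set c : ℕ := ((a : ZMod (p ^ B)) * ((b : ℕ) : ZMod (p ^ B))⁻¹).val + p ^ B with hc
  have hc0 : 0 < c := by
    have : 0 < p ^ B := pow_pos hp.out.pos _
    omega
  have hcub : c ≤ 2 * p ^ B := by
    have := ZMod.val_lt ((a : ZMod (p ^ B)) * ((b : ℕ) : ZMod (p ^ B))⁻¹)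
    omega
  have hbc0 : Nat.Coprime b p := (Nat.coprime_comm.mp ((Nat.Prime.coprime_iff_not_dvd hp.out).mpr hpb))
  have hbu : IsUnit ((b : ℕ) : ZMod (p ^ B)) := by
    rw [ZMod.isUnit_iff_coprime]
    exact Nat.Coprime.pow_right _ hbc0
  have hbc : ((p : ℤ) ^ B) ∣ ((b : ℤ) * (c : ℤ) - a) := by
    have hmulinv : ((b : ℕ) : ZMod (p ^ B)) * ((a : ZMod (p ^ B)) * ((b : ℕ) : ZMod (p ^ B))⁻¹)
        = (a : ZMod (p ^ B)) := by
      rw [mul_comm, mul_assoc, ZMod.inv_mul_of_unit _ hbu, mul_one]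
    have h0 : (((b : ℤ) * (c : ℤ) - a : ℤ) : ZMod (p ^ B)) = 0 := by
      push_cast
      rw [hc, Nat.cast_add, ZMod.natCast_self, add_zero, ZMod.natCast_val, ZMod.cast_id,
        hmulinv, sub_self]
    exact_mod_cast (ZMod.intCast_zmod_eq_zero_iff_dvd _ _).mp h0
  have hdvdk : ∀ k : ℕ, ((p : ℤ) ^ B) ∣ ((b : ℤ) * ((c : ℤ) + k) - (a + (k : ℤ) * b)) := by
    intro k
    have : (b : ℤ) * ((c : ℤ) + k) - (a + (k : ℤ) * b) = (b : ℤ) * c - a := by ring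
    rw [this]; exact hbc
  have hval : ∀ k, k ≤ n → padicValNat p (c + k) = padicValNat p (a + (k : ℤ) * b).natAbs := by
    intro k hkn
    have hy : ((b : ℤ) * ((c : ℤ) + k)) ≠ 0 := by positivity
    have htr := aux_transfer (hk k) hy (hvb k hkn) (hdvdk k)
    rw [← htr]
    have hcast : ((b : ℤ) * ((c : ℤ) + k)) = ((b * (c + k) : ℕ) : ℤ) := by push_cast; ring
    rw [hcast, Int.natAbs_natCast,
      padicValNat.mul (by omega) (by omega), padicValNat.eq_zero_of_not_dvd hpb, zero_add]
  set S : ℕ := ∑ k ∈ Finset.range (n + 1), padicValNat p (a + (k : ℤ) * b).natAbs with hSdef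
  have hsum : S = ∑ k ∈ Finset.range (n + 1), padicValNat p (c + k) := by
    rw [hSdef]
    exact Finset.sum_congr rfl fun k hkk =>
      (hval k (by have := Finset.mem_range.mp hkk; omega)).symm
  have hT : padicValNat p ((c - 1)!) + S = padicValNat p ((c + n)!) := by
    rw [hsum]; exact aux_telescope c hc0 n
  have hTz : (padicValNat p ((c - 1)!) : ℤ) + (S : ℤ) = (padicValNat p ((c + n)!) : ℤ) := by
    exact_mod_cast congrArg (Nat.cast : ℕ → ℤ) hT
  set s1 : ℕ := (Nat.digits p (c + n)).sum with hs1def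
  set s0 : ℕ := (Nat.digits p (c - 1)).sum with hs0def
  have L1 : ((p : ℤ) - 1) * padicValNat p ((c + n)!) = ((c + n : ℕ) : ℤ) - (s1 : ℤ) :=
    aux_legendre (c + n)
  have L0 : ((p : ℤ) - 1) * padicValNat p ((c - 1)!) = ((c - 1 : ℕ) : ℤ) - (s0 : ℤ) :=
    aux_legendre (c - 1)
  have hcn : ((c + n : ℕ) : ℤ) = (c : ℤ) + n := by push_cast; ring
  have hc1 : ((c - 1 : ℕ) : ℤ) = (c : ℤ) - 1 := by
    rw [Nat.cast_sub hc0, Nat.cast_one]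
  rw [hcn] at L1
  rw [hc1] at L0
  have hS : ((p : ℤ) - 1) * (S : ℤ) = ((n : ℤ) + 1) + ((s0 : ℤ) - (s1 : ℤ)) := by
    linear_combination ((p : ℤ) - 1) * hTz + L1 - L0
  -- bounds on digit sums
  have h5 : 3 * p ^ B ≤ p ^ (B + 2) := by
    have h3 : 3 ≤ p ^ 2 := by nlinarith
    calc 3 * p ^ B ≤ p ^ 2 * p ^ B := Nat.mul_le_mul_right _ h3
      _ = p ^ (B + 2) := by ring
  have hnM : n < p ^ B := by
    have h6 : n + 1 ≤ (n + 1) * b := Nat.le_mul_of_pos_right _ hb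
    omega
  have hcnb : c + n ≤ p ^ (B + 2) := by omega
  have hlog1 : Nat.log p (c + n) ≤ B + 2 := by
    have := Nat.log_mono_right (b := p) hcnb
    rwa [Nat.log_pow hp.out.one_lt] at this
  have hlog0 : Nat.log p (c - 1) ≤ B + 2 := by
    have h7 : Nat.log p (c - 1) ≤ Nat.log p (c + n) := Nat.log_mono_right (by omega)
    omega
  have hp1 : 1 ≤ p := hp.out.one_lt.le
  have hs1 : s1 ≤ (p - 1) * (B + 3) := by
    have := aux_digitsum_le (p := p) (m := c + n) hp2
    have h8 : (p - 1) * (Nat.log p (c + n) + 1) ≤ (p - 1) * (B + 3) :=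
      Nat.mul_le_mul_left _ (by omega)
    omega
  have hs0 : s0 ≤ (p - 1) * (B + 3) := by
    have := aux_digitsum_le (p := p) (m := c - 1) hp2
    have h8 : (p - 1) * (Nat.log p (c - 1) + 1) ≤ (p - 1) * (B + 3) :=
      Nat.mul_le_mul_left _ (by omega)
    omega
  have hbnd : (((p - 1) * (B + 3) : ℕ) : ℤ) = ((p : ℤ) - 1) * ((B : ℤ) + 3) := by
    rw [Nat.cast_mul, Nat.cast_sub hp1]; push_cast; ring
  have hs1z : (s1 : ℤ) ≤ ((p : ℤ) - 1) * ((B : ℤ) + 3) := by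
    rw [← hbnd]; exact_mod_cast hs1
  have hs0z : (s0 : ℤ) ≤ ((p : ℤ) - 1) * ((B : ℤ) + 3) := by
    rw [← hbnd]; exact_mod_cast hs0
  have hBlog : ((B : ℤ) + 3) = ((Nat.log p M : ℤ) + 4) := by rw [hB]; push_cast; ring
  rw [hS]
  have hringeq : ((n : ℤ) + 1) + ((s0 : ℤ) - (s1 : ℤ)) - ((n : ℤ) + 1) = (s0 : ℤ) - s1 := by ring
  rw [hringeq, abs_le]
  have hns0 : (0 : ℤ) ≤ s0 := Int.natCast_nonneg _
  have hns1 : (0 : ℤ) ≤ s1 := Int.natCast_nonneg _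
  constructor <;> [nlinarith [hs1z, hBlog]; nlinarith [hs0z, hBlog]]

omit hp in
lemma aux_log_tendsto (A : ℕ) (b : ℕ) (hp2 : 2 ≤ p) (hb : 0 < b) :
    Tendsto (fun n : ℕ => ((Nat.log p (A + (n + 1) * b) : ℝ) + 4) / ((n : ℝ) + 1))
      atTop (nhds 0) := by
  have hmain : Tendsto (fun n : ℕ => (Nat.log p (A + (n + 1) * b) : ℝ) / ((n : ℝ) + 1))
      atTop (nhds 0) := by
    set x : ℕ → ℕ := fun n => A + (n + 1) * b with hx
    have hxge : ∀ n : ℕ, n + 1 ≤ x n := by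
      intro n
      have : n + 1 ≤ (n + 1) * b := Nat.le_mul_of_pos_right _ hb
      simp only [hx]; omega
    have hxle : ∀ n : ℕ, x n ≤ (A + b) * (n + 1) := by
      intro n; simp only [hx]; nlinarith
    have hlogp : (0 : ℝ) < Real.log p :=
      Real.log_pos (by exact_mod_cast hp2)
    have h1 : Tendsto (fun y : ℝ => Real.log y / y) atTop (nhds 0) := by
      have := Real.isLittleO_log_id_atTop.tendsto_div_nhds_zero
      simpa using this
    have h2 : Tendsto (fun n : ℕ => ((x n : ℕ) : ℝ)) atTop atTop := by
      apply tendsto_natCast_atTop_atTop.comp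
      exact tendsto_atTop_mono (fun n => (Nat.le_succ n).trans (hxge n)) tendsto_id
    have hg : Tendsto (fun n : ℕ => ((A + b : ℝ) / Real.log p) *
        (Real.log (x n) / (x n))) atTop (nhds 0) := by
      have := (h1.comp h2).const_mul ((A + b : ℝ) / Real.log p)
      simpa using this
    apply squeeze_zero (fun n => by positivity) _ hg
    intro n
    have hX1 : (1 : ℝ) ≤ ((x n : ℕ) : ℝ) := by
      have := hxge n; exact_mod_cast Nat.one_le_iff_ne_zero.mpr (by omega)
    have hlogX : 0 ≤ Real.log (x n) := Real.log_nonneg hX1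
    have hn1 : (0 : ℝ) < (n : ℝ) + 1 := by positivity
    have hXpos : (0 : ℝ) < ((x n : ℕ) : ℝ) := by linarith
    have hup : ((x n : ℕ) : ℝ) ≤ ((A : ℝ) + b) * ((n : ℝ) + 1) := by
      have := hxle n
      have h' : ((x n : ℕ) : ℝ) ≤ (((A + b) * (n + 1) : ℕ) : ℝ) := by exact_mod_cast this
      calc ((x n : ℕ) : ℝ) ≤ (((A + b) * (n + 1) : ℕ) : ℝ) := h'
        _ = ((A : ℝ) + b) * ((n : ℝ) + 1) := by push_cast; ring
    calc (Nat.log p (x n) : ℝ) / ((n : ℝ) + 1)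
        ≤ Real.logb p (x n) / ((n : ℝ) + 1) := by
          gcongr
          exact Real.natLog_le_logb _ _
      _ = Real.log (x n) / (Real.log p * ((n : ℝ) + 1)) := by
          rw [Real.logb, div_div]
      _ ≤ (((A : ℝ) + b) * Real.log (x n)) / (Real.log p * ((x n : ℕ) : ℝ)) := by
          rw [div_le_div_iff₀ (by positivity) (by positivity)]
          nlinarith [mul_le_mul_of_nonneg_left hup
            (by positivity : (0:ℝ) ≤ Real.log ↑p * Real.log ((x n : ℕ) : ℝ))]
      _ = ((A + b : ℝ) / Real.log p) * (Real.log (x n) / (x n)) := by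
          push_cast; ring
  have h4 : Tendsto (fun n : ℕ => (4 : ℝ) / ((n : ℝ) + 1)) atTop (nhds 0) := by
    have := tendsto_one_div_add_atTop_nhds_zero_nat.const_mul (4 : ℝ)
    simpa [div_eq_mul_inv, mul_comm] using this
  have := hmain.add h4
  simpa [_root_.add_div] using this

lemma aux_ratio (a : ℤ) (b : ℕ) (hb : 0 < b) (hpb : ¬ p ∣ b)
    (hk : ∀ k : ℕ, a + (k : ℤ) * b ≠ 0) :
    Tendsto (fun n : ℕ =>
        ((∑ k ∈ Finset.range (n + 1), padicValNat p (a + (k : ℤ) * b).natAbs : ℕ) : ℝ)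
          / ((n : ℝ) + 1))
      atTop (nhds (1 / ((p : ℝ) - 1))) := by
  have hp2 : 2 ≤ p := hp.out.two_le
  have hpR : (1 : ℝ) < p := by exact_mod_cast hp.out.one_lt
  rw [← tendsto_sub_nhds_zero_iff]
  apply squeeze_zero_norm
    (a := fun n : ℕ => ((Nat.log p (a.natAbs + (n + 1) * b) : ℝ) + 4) / ((n : ℝ) + 1))
  · intro n
    have hkey := aux_key a b hb hpb hk n
    set V : ℕ := ∑ k ∈ Finset.range (n + 1), padicValNat p (a + (k : ℤ) * b).natAbs with hV
    set L : ℕ := Nat.log p (a.natAbs + (n + 1) * b) with hL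
    have h1 : |((p : ℝ) - 1) * (V : ℝ) - ((n : ℝ) + 1)| ≤ ((p : ℝ) - 1) * ((L : ℝ) + 4) := by
      exact_mod_cast hkey
    have hn1 : (0 : ℝ) < (n : ℝ) + 1 := by positivity
    have hp1 : (0 : ℝ) < (p : ℝ) - 1 := by linarith
    have hid : (V : ℝ) / ((n : ℝ) + 1) - 1 / ((p : ℝ) - 1)
        = (((p : ℝ) - 1) * V - ((n : ℝ) + 1)) / (((p : ℝ) - 1) * ((n : ℝ) + 1)) := by
      field_simp
    rw [Real.norm_eq_abs, hid, abs_div, abs_of_pos (mul_pos hp1 hn1)]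
    calc |((p : ℝ) - 1) * (V : ℝ) - ((n : ℝ) + 1)| / (((p : ℝ) - 1) * ((n : ℝ) + 1))
        ≤ (((p : ℝ) - 1) * ((L : ℝ) + 4)) / (((p : ℝ) - 1) * ((n : ℝ) + 1)) := by
          gcongr
      _ = ((L : ℝ) + 4) / ((n : ℝ) + 1) := mul_div_mul_left _ _ (by linarith)
  · exact aux_log_tendsto a.natAbs b hp2 hb

lemma aux_notdvd_den (γ : ℚ) (hγ0 : γ ≠ 0) (hint : ‖(γ : ℚ_[p])‖ ≤ 1) : ¬ p ∣ γ.den := by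
  intro hdvd
  have hden0 : γ.den ≠ 0 := γ.den_nz
  have hnum : ¬ (p : ℤ) ∣ γ.num := by
    intro hd
    have h1 : p ∣ γ.num.natAbs := by
      rw [← Int.dvd_natAbs] at hd
      exact_mod_cast hd
    have h2 := Nat.dvd_gcd h1 hdvd
    rw [Nat.Coprime.gcd_eq_one γ.reduced] at h2
    exact hp.out.one_lt.ne' (Nat.dvd_one.mp h2)
  have hd1 : 1 ≤ padicValNat p γ.den :=
    (padicValNat_dvd_iff_le hden0).mp (by simpa using hdvd)
  have hval : padicValRat p γ ≤ -1 := by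
    rw [padicValRat_def, padicValInt.eq_zero_of_not_dvd hnum]
    omega
  have hnorm : (1 : ℚ) < padicNorm p γ := by
    rw [padicNorm.eq_zpow_of_nonzero hγ0]
    have hpq : (1 : ℚ) < p := by exact_mod_cast hp.out.one_lt
    calc (1 : ℚ) < (p : ℚ) ^ (1 : ℤ) := by simpa using hpq
      _ ≤ (p : ℚ) ^ (-padicValRat p γ) := zpow_le_zpow_right₀ hpq.le (by omega)
  have : (1 : ℝ) < ‖(γ : ℚ_[p])‖ := by
    rw [Padic.eq_padicNorm]; exact_mod_cast hnorm
  linarith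

/-- For a prime `p` and `γ ∈ ℚ ∩ ℤ_p \ ℤ` (rational, hence algebraic and non-Liouville),
`lim_{n→∞} |γ(γ+1)⋯(γ+n)|_p^{1/(n+1)} = p^{-1/(p-1)}`. -/
theorem pochhammer_padic_norm_root_tendsto
    (p : ℕ) [Fact p.Prime] (γ : ℚ)
    (hint : ‖(γ : ℚ_[p])‖ ≤ 1) (hnotZ : ∀ z : ℤ, γ ≠ (z : ℚ)) :
    Tendsto
      (fun n : ℕ =>
        ‖∏ k ∈ Finset.range (n + 1), ((γ : ℚ_[p]) + (k : ℚ_[p]))‖ ^ ((1 : ℝ) / (n + 1)))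
      atTop (nhds ((p : ℝ) ^ (-(1 : ℝ) / ((p : ℝ) - 1)))) := by
  have hγ0 : γ ≠ 0 := fun h => hnotZ 0 (by simpa using h)
  have hb : 0 < γ.den := γ.pos
  have hpb : ¬ p ∣ γ.den := aux_notdvd_den γ hγ0 hint
  have hdq : ((γ.den : ℚ)) ≠ 0 := Nat.cast_ne_zero.mpr γ.den_nz
  have hk : ∀ k : ℕ, γ.num + (k : ℤ) * γ.den ≠ 0 := by
    intro k hzero
    apply hnotZ (-(k : ℤ))
    have h1 : γ.num = -((k : ℤ) * γ.den) := by omega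
    have h2 : (γ.num : ℚ) = -((k : ℚ) * (γ.den : ℚ)) := by exact_mod_cast h1
    rw [← Rat.num_div_den γ, h2]
    push_cast
    field_simp
  set V : ℕ → ℕ := fun n => ∑ k ∈ Finset.range (n + 1),
    padicValNat p (γ.num + (k : ℤ) * γ.den).natAbs with hV
  -- norm of the product
  have hnormn : ∀ n : ℕ, ‖∏ k ∈ Finset.range (n + 1), ((γ : ℚ_[p]) + (k : ℚ_[p]))‖
      = (p : ℝ) ^ (-(V n : ℤ)) := by
    intro n
    set P : ℤ := ∏ k ∈ Finset.range (n + 1), (γ.num + (k : ℤ) * γ.den) with hP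
    have hPne : P ≠ 0 := Finset.prod_ne_zero_iff.mpr fun k _ => hk k
    have hfac : ∀ k : ℕ, ((γ.den : ℚ_[p])) * ((γ : ℚ_[p]) + (k : ℚ_[p]))
        = ((γ.num + (k : ℤ) * γ.den : ℤ) : ℚ_[p]) := by
      intro k
      have hq : ((γ.den : ℚ)) * (γ + (k : ℚ)) = ((γ.num + (k : ℤ) * γ.den : ℤ) : ℚ) := by
        have hnd : ((γ.den : ℚ)) * γ = (γ.num : ℚ) := by
          rw [mul_comm]; exact_mod_cast Rat.mul_den_eq_num γ
        push_cast
        rw [mul_add, hnd]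
        ring
      have := congrArg (fun q : ℚ => (q : ℚ_[p])) hq
      push_cast at this ⊢
      exact this
    have hprod : ((γ.den : ℚ_[p])) ^ (n + 1)
        * ∏ k ∈ Finset.range (n + 1), ((γ : ℚ_[p]) + (k : ℚ_[p]))
        = ((P : ℤ) : ℚ_[p]) := by
      rw [hP, Int.cast_prod,
        show (∏ k ∈ Finset.range (n + 1), (((γ.num + (k : ℤ) * γ.den : ℤ)) : ℚ_[p]))
          = ∏ k ∈ Finset.range (n + 1), ((γ.den : ℚ_[p]) * ((γ : ℚ_[p]) + (k : ℚ_[p]))) from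
          Finset.prod_congr rfl fun k _ => (hfac k).symm,
        Finset.prod_mul_distrib, Finset.prod_const, Finset.card_range]
    have hbnorm : ‖((γ.den : ℚ_[p]) : ℚ_[p])‖ = 1 := by
      have hcast : ((γ.den : ℚ_[p]) : ℚ_[p]) = (((γ.den : ℤ)) : ℚ_[p]) := by push_cast; ring
      rw [hcast]
      have hle := Padic.norm_int_le_one (p := p) (γ.den : ℤ)
      have hnd : ¬ ((p : ℤ) ∣ (γ.den : ℤ)) := by
        rw [Int.natCast_dvd_natCast]; exact hpb
      have hnlt : ¬ ‖(((γ.den : ℤ)) : ℚ_[p])‖ < 1 := fun h =>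
        hnd ((Padic.norm_intCast_lt_one_iff).mp h)
      linarith [not_lt.mp hnlt]
    have hnrm := congrArg (fun x : ℚ_[p] => ‖x‖) hprod
    simp only [norm_mul, norm_pow, hbnorm, one_pow, one_mul] at hnrm
    rw [hnrm, Padic.norm_eq_zpow_neg_valuation (by exact_mod_cast hPne), Padic.valuation_intCast]
    congr 1
    rw [show padicValInt p P = padicValNat p P.natAbs from rfl, hP,
      aux_prod_val _ _ fun k _ => hk k]
  -- rewrite as rpow and take limits
  have hp0 : (0 : ℝ) < p := by exact_mod_cast (Fact.out : p.Prime).pos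
  have hfun : ∀ n : ℕ, ‖∏ k ∈ Finset.range (n + 1), ((γ : ℚ_[p]) + (k : ℚ_[p]))‖ ^ ((1 : ℝ) / (n + 1))
      = (p : ℝ) ^ (-(((V n : ℝ)) / ((n : ℝ) + 1))) := by
    intro n
    rw [hnormn n, ← Real.rpow_intCast (p : ℝ) (-(V n : ℤ)), ← Real.rpow_mul hp0.le]
    congr 1
    push_cast
    ring
  have hz : Tendsto (fun n : ℕ => -(((V n : ℝ)) / ((n : ℝ) + 1))) atTop
      (nhds (-(1 / ((p : ℝ) - 1)))) := by
    exact (aux_ratio γ.num γ.den hb hpb hk).neg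
  have hcomp := ((Real.continuousAt_const_rpow (show (p : ℝ) ≠ 0 by positivity)).tendsto).comp hz
  have hfin : Tendsto (fun n : ℕ => (p : ℝ) ^ (-(((V n : ℝ)) / ((n : ℝ) + 1)))) atTop
      (nhds ((p : ℝ) ^ (-(1 : ℝ) / ((p : ℝ) - 1)))) := by
    rw [show (-(1 : ℝ)) / ((p : ℝ) - 1) = -(1 / ((p : ℝ) - 1)) by ring]
    exact hcomp
  exact hfin.congr fun n => (hfun n).symm
end

section
/- Let p be a prime, d ≥ 1, and γ_1,…,γ_d ∈ ℚ ∩ ℤ_p \ ℤ. For a multi-index α = (α_1,…,α_d) ∈ ℕ^d, set (γ)_{α+1} = ∏_{i=1}^d γ_i(γ_i+1)⋯(γ_i+α_i). Then lim_{|α|→∞} |(γ)_{α+1}|_p^{1/|α|} = p^{-1/(p-1)}, where |α| = α_1+⋯+α_d. -/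
open Filter
open scoped Nat

private lemma padic_norm_eq_of_sub_lt {p : ℕ} [Fact p.Prime] {x y : ℚ_[p]}
    (h : ‖y - x‖ < ‖x‖) : ‖y‖ = ‖x‖ := by
  have h1 : ‖y‖ ≤ ‖x‖ := by
    have : y = (y - x) + x := by ring
    rw [this]
    exact le_trans (Padic.nonarchimedean _ _) (max_le h.le le_rfl)
  refine le_antisymm h1 (not_lt.1 fun hlt => ?_)
  have h2 : ‖x‖ ≤ max ‖x - y‖ ‖y‖ := by
    have : x = (x - y) + y := by ring
    nth_rewrite 1 [this]
    exact Padic.nonarchimedean _ _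
  rw [norm_sub_rev] at h2
  exact absurd h2 (not_le.2 (max_lt h hlt))

private lemma fact_prod_aux (c : ℕ) (hc : 1 ≤ c) :
    ∀ n, (c - 1) ! * ∏ k ∈ Finset.range (n + 1), (c + k) = (c + n) !
  | 0 => by
    obtain ⟨c', rfl⟩ := Nat.exists_eq_add_of_le hc
    simp [Nat.factorial_succ, Nat.add_comm, Nat.mul_comm]
  | n + 1 => by
    rw [Finset.prod_range_succ, ← Nat.mul_assoc, fact_prod_aux c hc n,
      ← Nat.add_assoc, Nat.factorial_succ (c + n), Nat.mul_comm]

private lemma digitSum_le_log (p m : ℕ) (hp : 1 < p) :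
    (p.digits m).sum ≤ (p - 1) * (Nat.log p m + 1) := by
  rcases Nat.eq_zero_or_pos m with rfl | hm
  · simp
  · calc (p.digits m).sum ≤ (p.digits m).length • (p - 1) := by
          apply List.sum_le_card_nsmul
          intro x hx
          exact Nat.le_sub_one_of_lt (Nat.digits_lt_base hp hx)
    _ = (Nat.log p m + 1) * (p - 1) := by
          rw [Nat.digits_len p m hp hm.ne', smul_eq_mul]
    _ = (p - 1) * (Nat.log p m + 1) := Nat.mul_comm _ _

set_option maxHeartbeats 1000000 in
private lemma coord (p : ℕ) [hp : Fact p.Prime] (γ : ℚ)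
    (h1 : ‖((γ : ℚ) : ℚ_[p])‖ ≤ 1) (h2 : ∀ z : ℤ, γ ≠ (z : ℚ)) :
    ∃ C : ℝ, 0 ≤ C ∧ ∀ n : ℕ, ∃ e : ℕ,
      ‖∏ k ∈ Finset.range (n + 1), ((γ : ℚ_[p]) + (k : ℚ_[p]))‖ = (p : ℝ) ^ (-(e : ℤ)) ∧
      |((p : ℝ) - 1) * e - (n + 1)| ≤ C * Real.log (n + 2) + C := by
  have hp1 : 1 < p := hp.out.one_lt
  set A : ℕ := γ.num.natAbs with hA
  set b : ℕ := γ.den with hb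
  have hbpos : 0 < b := γ.den_pos
  set K : ℕ := p * (A + b) + 1 with hK
  have hK1 : 1 ≤ K := Nat.le_add_left 1 _
  refine ⟨((p : ℝ) - 1) * (2 * Real.log K + 3), ?_, ?_⟩
  · have : (0:ℝ) ≤ Real.log K := Real.log_nonneg (by exact_mod_cast hK1)
    have hp1' : (1:ℝ) ≤ (p:ℝ) := by exact_mod_cast hp1.le
    nlinarith
  intro n
  set M : ℕ := A + (n + 1) * b with hM
  set J : ℕ := Nat.clog p (M + 1) with hJ
  -- the key lower bound
  have key : ∀ k : ℕ, k ≤ n → (p : ℝ) ^ (-(J : ℤ)) < ‖(γ : ℚ_[p]) + (k : ℚ_[p])‖ := by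
    intro k hk
    set m : ℤ := γ.num + k * γ.den with hm
    have hmQ : ((m : ℚ)) = (γ + k) * γ.den := by
      have hden0 : ((γ.den : ℚ)) ≠ 0 := by exact_mod_cast γ.den_pos.ne'
      have hnum : (γ.num : ℚ) = γ * γ.den := by
        have h := Rat.num_div_den γ
        rw [div_eq_iff hden0] at h
        exact h
      push_cast [hm]
      rw [hnum]; ring
    have hm0 : m ≠ 0 := by
      intro h
      apply h2 (-k)
      have h9 : ((0:ℚ)) = (γ + k) * γ.den := by rw [← hmQ, h]; norm_num
      have hden : ((γ.den : ℚ)) ≠ 0 := by exact_mod_cast γ.den_pos.ne'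
      have h10 : γ + (k:ℚ) = 0 := (mul_eq_zero.1 h9.symm).resolve_right hden
      push_cast
      linarith
    have habs : m.natAbs < p ^ J := by
      have h1' : m.natAbs ≤ A + k * b := by
        calc m.natAbs ≤ γ.num.natAbs + (k * γ.den : ℤ).natAbs := Int.natAbs_add_le _ _
        _ = A + k * b := by rw [hA, hb]; simp [Int.natAbs_mul]
      have h2' : A + k * b < M + 1 := by
        have h6 : k * b ≤ n * b := Nat.mul_le_mul_right b hk
        have h7 : (n + 1) * b = n * b + b := by ring
        rw [hM]
        omega
      calc m.natAbs < M + 1 := lt_of_le_of_lt h1' h2'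
      _ ≤ p ^ J := Nat.le_pow_clog hp1 _
    have hnd : ¬((p : ℤ) ^ J ∣ m) := by
      intro hdvd
      have h3 : ((p : ℤ) ^ J) ∣ (m.natAbs : ℤ) := (Int.dvd_natAbs).2 hdvd
      have h4 : ((p : ℤ) ^ J) ≤ m.natAbs :=
        Int.le_of_dvd (by exact_mod_cast Int.natAbs_pos.2 hm0) h3
      have : (p : ℤ) ^ J ≤ (m.natAbs : ℤ) := h4
      have : (p ^ J : ℕ) ≤ m.natAbs := by exact_mod_cast this
      omega
    have hnorm_m : ¬(‖(m : ℚ_[p])‖ ≤ (p : ℝ) ^ (-(J : ℤ))) := by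
      rw [show (-(J:ℤ)) = (-(J:ℕ) : ℤ) by norm_num, Padic.norm_int_le_pow_iff_dvd]
      exact hnd
    push_neg at hnorm_m
    refine lt_of_lt_of_le hnorm_m ?_
    have hcast : ((m : ℚ_[p])) = ((γ : ℚ_[p]) + k) * ((γ.den : ℕ) : ℚ_[p]) := by
      have := congrArg (fun q : ℚ => (q : ℚ_[p])) hmQ
      push_cast at this ⊢
      exact this
    rw [hcast, norm_mul]
    have hle1 : ‖((γ.den : ℕ) : ℚ_[p])‖ ≤ 1 := by
      have := Padic.norm_int_le_one (p := p) (γ.den : ℤ)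
      push_cast at this ⊢
      exact this
    calc ‖(γ : ℚ_[p]) + k‖ * ‖((γ.den : ℕ) : ℚ_[p])‖
        ≤ ‖(γ : ℚ_[p]) + k‖ * 1 := by
          exact mul_le_mul_of_nonneg_left hle1 (norm_nonneg _)
    _ = ‖(γ : ℚ_[p]) + k‖ := mul_one _
  -- approximation by a natural number
  set x : ℤ_[p] := ⟨(γ : ℚ_[p]), h1⟩ with hx
  set c : ℕ := x.appr J with hc
  have hcd : ‖(γ : ℚ_[p]) - (c : ℚ_[p])‖ ≤ (p : ℝ) ^ (-(J : ℤ)) := by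
    have h := x.appr_spec J
    rw [← PadicInt.norm_le_pow_iff_mem_span_pow] at h
    have heq : ((x - (c : ℤ_[p]) : ℤ_[p]) : ℚ_[p]) = (γ : ℚ_[p]) - (c : ℚ_[p]) := by
      rw [PadicInt.coe_sub, PadicInt.coe_natCast]
    rw [PadicInt.norm_def, heq] at h
    exact_mod_cast h
  have hc1 : 1 ≤ c := by
    by_contra hlt
    have hc0 : c = 0 := by omega
    have h0 := key 0 (Nat.zero_le n)
    rw [hc0] at hcd
    simp only [Nat.cast_zero, sub_zero] at hcd
    simp only [Nat.cast_zero, add_zero] at h0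
    exact absurd hcd (not_le.2 h0)
  have heqn : ∀ k : ℕ, k ≤ n →
      ‖(γ : ℚ_[p]) + (k : ℚ_[p])‖ = ‖((c + k : ℕ) : ℚ_[p])‖ := by
    intro k hk
    refine (padic_norm_eq_of_sub_lt ?_).symm
    have : ((c + k : ℕ) : ℚ_[p]) - ((γ : ℚ_[p]) + k) = (c : ℚ_[p]) - γ := by
      push_cast; ring
    rw [this, norm_sub_rev]
    exact lt_of_le_of_lt hcd (key k hk)
  set T : ℕ := ∏ k ∈ Finset.range (n + 1), (c + k) with hT
  have hT0 : T ≠ 0 := by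
    rw [hT]
    exact Finset.prod_ne_zero_iff.2 fun k _ => by omega
  have hfact : (c - 1) ! * T = (c + n) ! := fact_prod_aux c hc1 n
  set e : ℕ := padicValNat p T with he
  refine ⟨e, ?_, ?_⟩
  · -- norm equality
    have hnp : ‖∏ k ∈ Finset.range (n + 1), ((γ : ℚ_[p]) + (k : ℚ_[p]))‖
        = ‖((T : ℕ) : ℚ_[p])‖ := by
      rw [hT]
      push_cast
      rw [norm_prod, norm_prod]
      refine Finset.prod_congr rfl fun k hk => ?_
      rw [Finset.mem_range] at hk
      have := heqn k (by omega)
      push_cast at this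
      exact this
    rw [hnp, Padic.norm_eq_zpow_neg_valuation (by exact_mod_cast hT0 : ((T:ℕ) : ℚ_[p]) ≠ 0),
      Padic.valuation_natCast]
  · -- the estimate
    set s1 : ℕ := (p.digits (c - 1)).sum with hs1
    set s2 : ℕ := (p.digits (c + n)).sum with hs2
    have hv : padicValNat p ((c - 1) !) + e = padicValNat p ((c + n) !) := by
      rw [← hfact, padicValNat.mul (Nat.factorial_ne_zero _) hT0]
    have hL1 : (p - 1) * padicValNat p ((c - 1) !) = (c - 1) - s1 :=
      sub_one_mul_padicValNat_factorial (c - 1)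
    have hL2 : (p - 1) * padicValNat p ((c + n) !) = (c + n) - s2 :=
      sub_one_mul_padicValNat_factorial (c + n)
    have hs1le : s1 ≤ c - 1 := Nat.digit_sum_le p (c - 1)
    have hs2le : s2 ≤ c + n := Nat.digit_sum_le p (c + n)
    -- go to the reals
    have hcre : ((p : ℝ) - 1) * e = ((c : ℝ) + n - s2) - ((c : ℝ) - 1 - s1) := by
      have e1 : ((p:ℕ) - 1 : ℕ) * (padicValNat p ((c-1)!) : ℤ) = ((c:ℤ) - 1) - s1 := by
        have := congrArg (fun t : ℕ => (t : ℤ)) hL1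
        push_cast [Nat.cast_sub hs1le, Nat.cast_sub hc1] at this
        push_cast
        linarith [this]
      have e2 : ((p:ℕ) - 1 : ℕ) * (padicValNat p ((c+n)!) : ℤ) = ((c:ℤ) + n) - s2 := by
        have := congrArg (fun t : ℕ => (t : ℤ)) hL2
        push_cast [Nat.cast_sub hs2le] at this
        push_cast
        linarith [this]
      have hvz : (padicValNat p ((c - 1) !) : ℤ) + (e : ℤ) = (padicValNat p ((c + n) !) : ℤ) := by
        exact_mod_cast hv
      have e3 : ((p:ℕ) - 1 : ℕ) * (e : ℤ) = (((c:ℤ) + n) - s2) - (((c:ℤ) - 1) - s1) := by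
        linear_combination e2 - e1 + (((p:ℕ) - 1 : ℕ) : ℤ) * hvz
      have hpcast : (((p:ℕ) - 1 : ℕ) : ℝ) = (p : ℝ) - 1 := by
        push_cast [Nat.cast_sub hp1.le]; ring
      have := congrArg (fun t : ℤ => (t : ℝ)) e3
      push_cast at this
      rw [hpcast] at this
      linarith [this]
    have hmain : ((p : ℝ) - 1) * e - (n + 1) = (s1 : ℝ) - s2 := by
      rw [hcre]; ring
    rw [hmain]
    -- bound |s1 - s2|
    set L : ℕ := Nat.log p (c + n) with hLdef
    have hB1 : s1 ≤ (p - 1) * (L + 1) := by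
      calc s1 ≤ (p - 1) * (Nat.log p (c - 1) + 1) := digitSum_le_log p (c - 1) hp1
      _ ≤ (p - 1) * (L + 1) := by
          apply Nat.mul_le_mul_left
          have : Nat.log p (c - 1) ≤ L := Nat.log_mono_right (by omega)
          omega
    have hB2 : s2 ≤ (p - 1) * (L + 1) := digitSum_le_log p (c + n) hp1
    have habs : |(s1 : ℝ) - s2| ≤ ((p - 1) * (L + 1) : ℕ) := by
      rw [abs_sub_le_iff]
      constructor
      · have : (s1 : ℝ) ≤ ((p - 1) * (L + 1) : ℕ) := by exact_mod_cast hB1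
        have h0 : (0:ℝ) ≤ (s2 : ℝ) := Nat.cast_nonneg _
        linarith
      · have : (s2 : ℝ) ≤ ((p - 1) * (L + 1) : ℕ) := by exact_mod_cast hB2
        have h0 : (0:ℝ) ≤ (s1 : ℝ) := Nat.cast_nonneg _
        linarith
    refine le_trans habs ?_
    -- now bound ((p-1)*(L+1) : ℕ) in ℝ
    have hM1 : 1 ≤ M := by
      have hble : b ≤ (n + 1) * b := Nat.le_mul_of_pos_left b (by omega)
      rw [hM]; omega
    have hcn1 : c + n ≤ K * (n + 2) := by
      have hclt : c < p ^ J := PadicInt.appr_lt x J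
      have hJpos : 0 < J := Nat.clog_pos hp1 (by omega : 2 ≤ M + 1)
      have hpj : p ^ J ≤ p * M := by
        have h5 : p ^ (J - 1) < M + 1 := Nat.pow_pred_clog_lt_self hp1 (by omega)
        have : p ^ J = p * p ^ (J - 1) := by
          rw [← pow_succ']
          congr 1
          omega
        rw [this]
        exact Nat.mul_le_mul_left p (by omega)
      have hcM : c + n ≤ p * M + n := by omega
      refine le_trans hcM ?_
      rw [hM, hK]
      have q1 : p * A ≤ p * A * (n + 2) := Nat.le_mul_of_pos_right _ (by omega)
      have q2 : p * ((n + 1) * b) ≤ p * b * (n + 2) := by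
        calc p * ((n + 1) * b) = p * (b * (n + 1)) := by ring
        _ ≤ p * (b * (n + 2)) := Nat.mul_le_mul_left p (Nat.mul_le_mul_left b (by omega))
        _ = p * b * (n + 2) := by ring
      calc p * (A + (n + 1) * b) + n = p * A + p * ((n + 1) * b) + n := by ring
      _ ≤ p * A * (n + 2) + p * b * (n + 2) + (n + 2) := by omega
      _ = (p * (A + b) + 1) * (n + 2) := by ring
    have hcn0 : c + n ≠ 0 := by omega
    have hLreal : (L : ℝ) ≤ 2 * Real.log (K * (n + 2) : ℕ) := by
      have hpow : (2 : ℕ) ^ L ≤ K * (n + 2) :=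
        le_trans (le_trans (Nat.pow_le_pow_left (by omega : 2 ≤ p) L) (Nat.pow_log_le_self p hcn0)) hcn1
      have hpowR : (2 : ℝ) ^ L ≤ ((K * (n + 2) : ℕ) : ℝ) := by exact_mod_cast hpow
      have hlog : (L : ℝ) * Real.log 2 ≤ Real.log (K * (n + 2) : ℕ) := by
        rw [← Real.log_pow]
        exact Real.log_le_log (by positivity) hpowR
      nlinarith [Real.log_two_gt_d9, Nat.cast_nonneg (α := ℝ) L]
    have hKn : Real.log ((K * (n + 2) : ℕ) : ℝ) = Real.log K + Real.log (n + 2) := by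
      have hKR : (0:ℝ) < (K:ℝ) := by exact_mod_cast Nat.lt_of_lt_of_le Nat.zero_lt_one hK1
      have hn2R : (0:ℝ) < ((n + 2 : ℕ) : ℝ) := by exact_mod_cast Nat.succ_pos (n + 1)
      rw [Nat.cast_mul, Real.log_mul hKR.ne' hn2R.ne']
      push_cast
      ring
    rw [hKn] at hLreal
    have hcastPL : (((p - 1) * (L + 1) : ℕ) : ℝ) = ((p:ℝ) - 1) * ((L : ℝ) + 1) := by
      push_cast [Nat.cast_sub hp1.le]
      ring
    rw [hcastPL]
    have hlogK : (0:ℝ) ≤ Real.log K := Real.log_nonneg (by exact_mod_cast hK1)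
    have hlogn : (0:ℝ) ≤ Real.log (n + 2) := Real.log_nonneg (by
      have := Nat.cast_nonneg (α := ℝ) n; linarith)
    have hp1R : (1:ℝ) ≤ (p : ℝ) := by exact_mod_cast hp1.le
    have hq : (0:ℝ) ≤ (p:ℝ) - 1 := by linarith
    have h1 : ((p:ℝ) - 1) * ((L:ℝ) + 1)
        ≤ ((p:ℝ) - 1) * (2 * Real.log K + 2 * Real.log (n + 2) + 1) :=
      mul_le_mul_of_nonneg_left (by linarith [hLreal]) hq
    refine le_trans h1 ?_
    nlinarith [mul_nonneg (mul_nonneg hq hlogK) hlogn, mul_nonneg hq hlogn, mul_nonneg hq hlogK]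

private lemma tendsto_aux_H (a b c : ℝ) (hc : 0 < c) :
    Tendsto (fun N : ℕ => (a + b * (Real.log ((N : ℝ) + 2) + 1)) / (c * N)) atTop (nhds 0) := by
  have hlogo : (fun x : ℝ => Real.log (x + 2)) =o[atTop] (fun x : ℝ => x) := by
    have h3 : (fun x : ℝ => Real.log (x + 2)) =o[atTop] (fun x : ℝ => x + 2) :=
      Real.isLittleO_log_id_atTop.comp_tendsto (tendsto_atTop_add_const_right atTop 2 tendsto_id)
    refine h3.trans_isBigO (Asymptotics.isBigO_iff.2 ⟨2, ?_⟩)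
    filter_upwards [eventually_ge_atTop (2:ℝ)] with x hx
    rw [Real.norm_eq_abs, Real.norm_eq_abs, abs_of_nonneg (by linarith), abs_of_nonneg (by linarith)]
    linarith
  have T2 : Tendsto (fun x : ℝ => Real.log (x + 2) / x) atTop (nhds 0) :=
    hlogo.tendsto_div_nhds_zero
  have T1 : Tendsto (fun x : ℝ => ((a + b) / c) * x⁻¹) atTop (nhds 0) := by
    simpa using tendsto_inv_atTop_zero.const_mul ((a + b) / c)
  have hreal : Tendsto (fun x : ℝ => (a + b * (Real.log (x + 2) + 1)) / (c * x))
      atTop (nhds 0) := by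
    have heq : ∀ x : ℝ, (a + b * (Real.log (x + 2) + 1)) / (c * x)
        = ((a + b) / c) * x⁻¹ + (b / c) * (Real.log (x + 2) / x) := by
      intro x
      rw [show a + b * (Real.log (x + 2) + 1) = (a + b) + b * Real.log (x + 2) by ring,
        add_div]
      congr 1
      · rw [div_mul_eq_div_div, div_eq_mul_inv]
      · rw [mul_div_mul_comm]
    have := T1.add (T2.const_mul (b / c))
    simp only [mul_zero, add_zero] at this
    exact Tendsto.congr (fun x => (heq x).symm) this
  exact hreal.comp tendsto_natCast_atTop_atTop

/-- For `γ_1,…,γ_d ∈ ℚ ∩ ℤ_p \ ℤ`, the multi-index Pochhammer products satisfy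
`lim_{|α|→∞} |(γ)_{α+1}|_p^{1/|α|} = p^{-1/(p-1)}`, where the limit is taken along
the filter of multi-indices `α ∈ ℕ^d` with `|α| = α_1 + ⋯ + α_d → ∞`. -/
theorem multi_pochhammer_padic_norm_root_tendsto
    (p : ℕ) [Fact p.Prime] (d : ℕ) (hd : 1 ≤ d) (γ : Fin d → ℚ)
    (hint : ∀ i, ‖((γ i : ℚ) : ℚ_[p])‖ ≤ 1) (hnotZ : ∀ i, ∀ z : ℤ, γ i ≠ (z : ℚ)) :
    Tendsto
      (fun α : Fin d → ℕ =>
        ‖∏ i, ∏ k ∈ Finset.range (α i + 1), ((γ i : ℚ_[p]) + (k : ℚ_[p]))‖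
          ^ ((1 : ℝ) / (∑ i, α i : ℕ)))
      (comap (fun α : Fin d → ℕ => ∑ i, α i) atTop)
      (nhds ((p : ℝ) ^ (-(1 : ℝ) / ((p : ℝ) - 1)))) := by
  have hp1 : 1 < p := (Fact.out : p.Prime).one_lt
  have hp0R : (0:ℝ) < (p:ℝ) := by exact_mod_cast Nat.lt_of_lt_of_le Nat.zero_lt_one hp1.le
  have hp1R : (1:ℝ) < (p:ℝ) := by exact_mod_cast hp1
  choose C hC0 hC using fun i => coord p (γ i) (hint i) (hnotZ i)
  choose e he1 he2 using fun i n => hC i n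
  set F := comap (fun α : Fin d → ℕ => ∑ i, α i) atTop with hF
  have hsF : Tendsto (fun α : Fin d → ℕ => ∑ i, α i) F atTop := tendsto_comap
  -- rewrite the function
  have hfun : ∀ α : Fin d → ℕ,
      ‖∏ i, ∏ k ∈ Finset.range (α i + 1), ((γ i : ℚ_[p]) + (k : ℚ_[p]))‖
          ^ ((1 : ℝ) / (∑ i, α i : ℕ))
      = (p:ℝ) ^ (-((∑ i, (e i (α i) : ℝ)) / ((∑ i, α i : ℕ) : ℝ))) := by
    intro α
    rw [norm_prod]
    have hstep : ∀ i ∈ Finset.univ,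
        ‖∏ k ∈ Finset.range (α i + 1), ((γ i : ℚ_[p]) + (k : ℚ_[p]))‖
          = (p:ℝ) ^ (-((e i (α i) : ℕ) : ℝ)) := fun i _ => by
      rw [he1 i (α i), ← Real.rpow_intCast]
      push_cast
      ring_nf
    rw [Finset.prod_congr rfl hstep, ← Real.rpow_sum_of_pos hp0R, ← Real.rpow_mul hp0R.le]
    congr 1
    rw [Finset.sum_neg_distrib]
    ring
  set C' : ℝ := ∑ i, C i with hC'
  have hC'0 : 0 ≤ C' := Finset.sum_nonneg fun i _ => hC0 i
  have hpm1 : (0:ℝ) < (p:ℝ) - 1 := by linarith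
  have est : ∀ α : Fin d → ℕ, 1 ≤ ∑ i, α i →
      |(∑ i, (e i (α i) : ℝ)) / ((∑ i, α i : ℕ) : ℝ) - 1 / ((p:ℝ) - 1)|
        ≤ ((d:ℝ) + C' * (Real.log (((∑ i, α i : ℕ) : ℝ) + 2) + 1))
            / (((p:ℝ) - 1) * ((∑ i, α i : ℕ) : ℝ)) := by
    intro α hα
    set N : ℕ := ∑ i, α i with hN
    have hNR : (1:ℝ) ≤ (N:ℝ) := by exact_mod_cast hα
    have hNpos : (0:ℝ) < (N:ℝ) := lt_of_lt_of_le one_pos hNR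
    set ER : ℝ := ∑ i, (e i (α i) : ℝ) with hER
    have h1 : |((p:ℝ) - 1) * ER - ((N:ℝ) + d)| ≤ C' * (Real.log ((N:ℝ) + 2) + 1) := by
      have hsumα : ∑ i, ((α i : ℝ) + 1) = (N:ℝ) + d := by
        rw [Finset.sum_add_distrib]
        have h7 : ∑ i, ((α i : ℝ)) = (N:ℝ) := by rw [hN]; push_cast; rfl
        rw [h7]
        simp [Finset.card_univ]
      have hsplit : ((p:ℝ) - 1) * ER - ((N:ℝ) + d)
          = ∑ i, (((p:ℝ) - 1) * (e i (α i) : ℝ) - ((α i : ℝ) + 1)) := by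
        rw [Finset.sum_sub_distrib, ← Finset.mul_sum, hsumα, hER]
      rw [hsplit]
      refine le_trans (Finset.abs_sum_le_sum_abs _ _) ?_
      have hterm : ∀ i ∈ Finset.univ, |((p:ℝ)-1) * (e i (α i):ℝ) - ((α i:ℝ)+1)|
          ≤ C i * Real.log ((N:ℝ) + 2) + C i := by
        intro i _
        refine le_trans (he2 i (α i)) ?_
        have hle : (α i : ℝ) ≤ (N:ℝ) := by
          exact_mod_cast Finset.single_le_sum (fun j _ => Nat.zero_le (α j)) (Finset.mem_univ i)
        have hlog := Real.log_le_log (by positivity) (by linarith : (α i:ℝ)+2 ≤ (N:ℝ)+2)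
        nlinarith [hC0 i]
      refine le_trans (Finset.sum_le_sum hterm) (le_of_eq ?_)
      rw [Finset.sum_add_distrib, ← Finset.sum_mul, hC']
      ring
    have h2 : |((p:ℝ)-1)*ER - (N:ℝ)| ≤ (d:ℝ) + C'*(Real.log ((N:ℝ)+2)+1) := by
      calc |((p:ℝ)-1)*ER - (N:ℝ)| = |(((p:ℝ)-1)*ER - ((N:ℝ)+d)) + d| := by ring_nf
      _ ≤ |((p:ℝ)-1)*ER - ((N:ℝ)+d)| + |(d:ℝ)| := abs_add_le _ _
      _ ≤ C'*(Real.log ((N:ℝ)+2)+1) + d := by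
          have : |(d:ℝ)| = (d:ℝ) := abs_of_nonneg (Nat.cast_nonneg d)
          rw [this]; linarith [h1]
      _ = (d:ℝ) + C'*(Real.log ((N:ℝ)+2)+1) := by ring
    have key : ER / (N:ℝ) - 1 / ((p:ℝ) - 1)
        = (((p:ℝ)-1)*ER - (N:ℝ)) / (((p:ℝ)-1)*(N:ℝ)) := by
      field_simp
    rw [key, abs_div, abs_of_pos (by positivity : (0:ℝ) < ((p:ℝ)-1)*(N:ℝ))]
    exact div_le_div_of_nonneg_right h2 (by positivity) |>.trans_eq rfl
  have hH := (tendsto_aux_H (d:ℝ) C' ((p:ℝ)-1) hpm1).comp hsF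
  have hev : ∀ᶠ α in F, |(∑ i, (e i (α i):ℝ))/((∑ i, α i : ℕ):ℝ) - 1/((p:ℝ)-1)| ≤
      ((d:ℝ) + C' * (Real.log (((∑ i, α i : ℕ):ℝ) + 2) + 1))
        / (((p:ℝ)-1) * ((∑ i, α i:ℕ):ℝ)) := by
    filter_upwards [hsF.eventually (eventually_ge_atTop 1)] with α hα using est α hα
  have h0 : Tendsto (fun α : Fin d → ℕ =>
      (∑ i, (e i (α i):ℝ))/((∑ i, α i:ℕ):ℝ) - 1/((p:ℝ)-1)) F (nhds 0) := by
    rw [tendsto_zero_iff_abs_tendsto_zero]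
    exact squeeze_zero' (Eventually.of_forall fun α => abs_nonneg _) hev hH
  have hE : Tendsto (fun α : Fin d → ℕ =>
      (∑ i, (e i (α i):ℝ))/((∑ i, α i:ℕ):ℝ)) F (nhds (1/((p:ℝ)-1))) := by
    have := h0.add_const (1/((p:ℝ)-1))
    simpa using this
  have hcont : ContinuousAt (fun x : ℝ => (p:ℝ) ^ x) (-(1/((p:ℝ)-1))) :=
    Real.continuousAt_const_rpow hp0R.ne'
  have hcomp := hcont.tendsto.comp hE.neg
  have hfin : Tendsto (fun α : Fin d → ℕ =>
      (p:ℝ) ^ (-((∑ i, (e i (α i):ℝ))/((∑ i, α i:ℕ):ℝ)))) F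
      (nhds ((p:ℝ) ^ (-(1/((p:ℝ)-1))))) := hcomp
  rw [show (-(1:ℝ))/((p:ℝ)-1) = -(1/((p:ℝ)-1)) by ring]
  exact Tendsto.congr (fun α => (hfun α).symm) hfin
end

section
/- Let J = γI_m + N be an m×m Jordan block over ℚ_p, with γ ∈ ℤ_p and N nilpotent with N^m = 0, and let τ ∈ ℚ_p \ {0}. For n ≥ 1 define C_{J,τ}(n) = τ^{-n}∏_{ℓ=1}^n (J + ℓI). Suppose |γ+ℓ|_p ≥ (θℓ)^{-1} for all ℓ ≥ 1 (some θ > 0, e.g. γ ∈ ℚ ∩ ℤ_p \ ℤ), and that the off-diagonal entries of N have p-adic absolute value at most 1. Then |τ^{-n}(γ+1)_n|_p ≤ ‖C_{J,τ}(n)‖_p ≤ (θn)^{m-1} |τ^{-n}(γ+1)_n|_p for all n ≥ 1, where (γ+1)_n = (γ+1)(γ+2)⋯(γ+n) and ‖·‖_p is the entrywise max p-adic norm. -/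
section

variable {K : Type*} [Field K] {ι : Type*} [Fintype ι] [DecidableEq ι]

/-- `upProd Λ n = (Λ + nI)(Λ + (n-1)I)⋯(Λ + I)`. -/
def upProd (Λ : Matrix ι ι K) : ℕ → Matrix ι ι K
  | 0 => 1
  | m + 1 => (Λ + ((m : K) + 1) • (1 : Matrix ι ι K)) * upProd Λ m

end

/-- Entrywise max `p`-adic norm of a matrix. -/
noncomputable def pMatNorm {p : ℕ} [Fact p.Prime] {m n : Type*} [Fintype m] [Fintype n]
    [Nonempty m] [Nonempty n] (Y : Matrix m n ℚ_[p]) : ℝ :=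
  Finset.univ.sup' Finset.univ_nonempty
    (fun i : m => Finset.univ.sup' Finset.univ_nonempty (fun j : n => ‖Y i j‖))

open Polynomial Finset

private lemma padic_sum_norm_le {p : ℕ} [Fact p.Prime] {α : Type*} (s : Finset α)
    (f : α → ℚ_[p]) {C : ℝ} (hC : 0 ≤ C) (h : ∀ x ∈ s, ‖f x‖ ≤ C) :
    ‖∑ x ∈ s, f x‖ ≤ C := by
  classical
  induction s using Finset.induction with
  | empty => simpa using hC
  | insert a s hx ih =>
    rw [Finset.sum_insert hx]
    refine le_trans (Padic.nonarchimedean _ _) (max_le (h _ (mem_insert_self ..)) (ih ?_))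
    exact fun x hxs => h x (mem_insert_of_mem hxs)

private def Upper {m : ℕ} {R : Type*} [CommRing R] (A : Matrix (Fin m) (Fin m) R) : Prop :=
  ∀ i j : Fin m, (j : ℕ) < (i : ℕ) → A i j = 0

private def SUpper {m : ℕ} {R : Type*} [CommRing R] (A : Matrix (Fin m) (Fin m) R) : Prop :=
  ∀ i j : Fin m, (j : ℕ) ≤ (i : ℕ) → A i j = 0

private lemma supper_mul {m : ℕ} {R : Type*} [CommRing R]
    {A B : Matrix (Fin m) (Fin m) R} (hA : Upper A) (hB : SUpper B) :
    SUpper (A * B) := by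
  intro i j hij
  rw [Matrix.mul_apply]
  refine Finset.sum_eq_zero fun k _ => ?_
  by_cases hk : (k : ℕ) < (i : ℕ)
  · rw [hA i k hk, zero_mul]
  · rw [hB k j (le_trans hij (not_lt.mp hk)), mul_zero]

private lemma upper_pow {m : ℕ} {R : Type*} [CommRing R]
    {N : Matrix (Fin m) (Fin m) R} (hN : SUpper N) (t : ℕ) : Upper (N ^ t) := by
  induction t with
  | zero =>
    intro i j hij
    have hne : i ≠ j := fun h => by subst h; exact lt_irrefl _ hij
    simp [Matrix.one_apply, hne]
  | succ t ih =>
    intro i j hij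
    rw [pow_succ]
    exact supper_mul ih hN i j (le_of_lt hij)

private lemma supper_pow {m : ℕ} {R : Type*} [CommRing R]
    {N : Matrix (Fin m) (Fin m) R} (hN : SUpper N) (t : ℕ) (ht : 1 ≤ t) :
    SUpper (N ^ t) := by
  obtain ⟨s, rfl⟩ := Nat.exists_eq_add_of_le ht
  rw [add_comm, pow_succ]
  exact supper_mul (upper_pow hN s) hN

private lemma pow_entry_norm_le {p : ℕ} [Fact p.Prime] {m : ℕ}
    {N : Matrix (Fin m) (Fin m) ℚ_[p]} (hbd : ∀ i j, ‖N i j‖ ≤ 1) (t : ℕ) :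
    ∀ i j, ‖(N ^ t) i j‖ ≤ 1 := by
  induction t with
  | zero =>
    intro i j
    by_cases h : i = j <;> simp [pow_zero, Matrix.one_apply, h]
  | succ t ih =>
    intro i j
    rw [pow_succ, Matrix.mul_apply]
    refine padic_sum_norm_le _ _ zero_le_one fun k _ => ?_
    rw [norm_mul]
    exact mul_le_one₀ (ih i k) (norm_nonneg _) (hbd k j)

private lemma upProd_eq_aeval {p : ℕ} [Fact p.Prime] {m : ℕ}
    (γ : ℚ_[p]) (N : Matrix (Fin m) (Fin m) ℚ_[p]) (n : ℕ) :
    upProd (γ • (1 : Matrix (Fin m) (Fin m) ℚ_[p]) + N) n =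
      Polynomial.aeval N (∏ ℓ ∈ range n, (X + C (γ + 1 + (ℓ : ℚ_[p])))) := by
  induction n with
  | zero => simp [upProd]
  | succ n ih =>
    rw [upProd, ih, Finset.prod_range_succ, mul_comm (∏ ℓ ∈ range n, (X + C (γ + 1 + (ℓ:ℚ_[p]))))
      (X + C (γ + 1 + (n:ℚ_[p]))), map_mul, map_add, aeval_X, aeval_C,
      Algebra.algebraMap_eq_smul_one]
    congr 1
    module

/-- For a Jordan block `J = γI + N` over `ℚ_p` (`γ ∈ ℤ_p`, `N` strictly upper triangular
nilpotent with entries of norm ≤ 1), if `|γ + ℓ|_p ≥ (θℓ)⁻¹` for all `ℓ ≥ 1`, then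
`|τ^{-n}(γ+1)_n|_p ≤ ‖C_{J,τ}(n)‖_p ≤ (θn)^{m-1} |τ^{-n}(γ+1)_n|_p` for all `n ≥ 1`. -/
theorem jordan_block_Cmat_norm_bounds
    (p : ℕ) [Fact p.Prime] (m : ℕ) [NeZero m] (γ : ℤ_[p])
    (N : Matrix (Fin m) (Fin m) ℚ_[p])
    (htri : ∀ i j : Fin m, (j : ℕ) ≤ (i : ℕ) → N i j = 0)
    (hnil : N ^ m = 0) (hbd : ∀ i j : Fin m, ‖N i j‖ ≤ 1)
    (τ : ℚ_[p]) (hτ : τ ≠ 0) (θ : ℝ) (hθ : 0 < θ)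
    (hlow : ∀ ℓ : ℕ, 1 ≤ ℓ → (θ * (ℓ : ℝ))⁻¹ ≤ ‖(γ : ℚ_[p]) + (ℓ : ℚ_[p])‖) :
    ∀ n : ℕ, 1 ≤ n →
      ‖τ⁻¹ ^ n * ∏ ℓ ∈ Finset.range n, ((γ : ℚ_[p]) + 1 + (ℓ : ℚ_[p]))‖ ≤
          pMatNorm (τ⁻¹ ^ n • upProd ((γ : ℚ_[p]) • (1 : Matrix (Fin m) (Fin m) ℚ_[p]) + N) n) ∧
        pMatNorm (τ⁻¹ ^ n • upProd ((γ : ℚ_[p]) • (1 : Matrix (Fin m) (Fin m) ℚ_[p]) + N) n) ≤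
          (θ * (n : ℝ)) ^ (m - 1) *
            ‖τ⁻¹ ^ n * ∏ ℓ ∈ Finset.range n, ((γ : ℚ_[p]) + 1 + (ℓ : ℚ_[p]))‖ := by
  intro n hn
  classical
  set c : ℕ → ℚ_[p] := fun ℓ => (γ : ℚ_[p]) + 1 + (ℓ : ℚ_[p]) with hc
  set P : Polynomial ℚ_[p] := ∏ ℓ ∈ range n, (X + C (c ℓ)) with hP
  have hθ1 : (1 : ℝ) ≤ θ := by
    have h1 := hlow 1 le_rfl
    have hγ1 : ‖(γ : ℚ_[p]) + ((1 : ℕ) : ℚ_[p])‖ ≤ 1 := by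
      refine le_trans (Padic.nonarchimedean _ _) (max_le ?_ (by simp))
      rw [PadicInt.padic_norm_e_of_padicInt]
      exact PadicInt.norm_le_one γ
    have hinv : θ⁻¹ ≤ 1 := by
      have := le_trans h1 hγ1
      simpa using this
    have h2 : θ * θ⁻¹ ≤ θ * 1 := mul_le_mul_of_nonneg_left hinv hθ.le
    rwa [mul_inv_cancel₀ hθ.ne', mul_one] at h2
  have hn0 : (0:ℝ) < (n:ℝ) := by exact_mod_cast hn
  have hθn : (0:ℝ) < θ * n := by positivity
  have hθn1 : (1:ℝ) ≤ θ * n := by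
    calc (1:ℝ) ≤ θ := hθ1
    _ = θ * 1 := (mul_one θ).symm
    _ ≤ θ * n := by
        apply mul_le_mul_of_nonneg_left _ hθ.le
        exact_mod_cast hn
  have hcl : ∀ ℓ ∈ range n, (θ * (n:ℝ))⁻¹ ≤ ‖c ℓ‖ := by
    intro ℓ hℓ
    have h1 : c ℓ = (γ:ℚ_[p]) + ((ℓ+1 : ℕ) : ℚ_[p]) := by rw [hc]; push_cast; ring
    rw [h1]
    refine le_trans ?_ (hlow (ℓ+1) (Nat.le_add_left 1 ℓ))
    have hℓn : (ℓ:ℝ) + 1 ≤ n := by exact_mod_cast Finset.mem_range.mp hℓ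
    have : θ * ((ℓ:ℝ)+1) ≤ θ * n := mul_le_mul_of_nonneg_left hℓn hθ.le
    have hpos : (0:ℝ) < θ * ((ℓ:ℝ)+1) := by positivity
    push_cast
    exact inv_anti₀ hpos this
  have hcoeff : ∀ t ≤ n, ‖P.coeff t‖ ≤ ‖∏ ℓ ∈ range n, c ℓ‖ * (θ*n)^t := by
    intro t ht
    rw [hP, Finset.prod_X_add_C_coeff _ _ (by simpa using ht), card_range]
    refine padic_sum_norm_le _ _ (by positivity) fun S hS => ?_
    rw [Finset.mem_powersetCard] at hS
    obtain ⟨hSsub, hScard⟩ := hS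
    rw [norm_prod]
    have hsd : (∏ ℓ ∈ range n \ S, ‖c ℓ‖) * ∏ ℓ ∈ S, ‖c ℓ‖ = ∏ ℓ ∈ range n, ‖c ℓ‖ :=
      Finset.prod_sdiff hSsub
    have hcard : (range n \ S).card = t := by
      rw [card_sdiff_of_subset hSsub, card_range, hScard]; omega
    have hlower : ((θ*(n:ℝ))⁻¹)^t ≤ ∏ ℓ ∈ range n \ S, ‖c ℓ‖ := by
      calc ((θ*(n:ℝ))⁻¹)^t = ∏ _ℓ ∈ range n \ S, (θ*(n:ℝ))⁻¹ := by rw [prod_const, hcard]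
      _ ≤ _ := Finset.prod_le_prod (fun _ _ => by positivity)
            (fun ℓ hℓ => hcl ℓ (Finset.mem_sdiff.mp hℓ).1)
    have hSnn : (0:ℝ) ≤ ∏ ℓ ∈ S, ‖c ℓ‖ := Finset.prod_nonneg fun _ _ => norm_nonneg _
    have key : ((θ*(n:ℝ))⁻¹)^t * ∏ ℓ ∈ S, ‖c ℓ‖ ≤ ∏ ℓ ∈ range n, ‖c ℓ‖ := by
      rw [← hsd]; exact mul_le_mul_of_nonneg_right hlower hSnn
    have := mul_le_mul_of_nonneg_left key (le_of_lt (pow_pos hθn t))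
    calc ∏ ℓ ∈ S, ‖c ℓ‖
        = (θ*(n:ℝ))^t * (((θ*(n:ℝ))⁻¹)^t * ∏ ℓ ∈ S, ‖c ℓ‖) := by
          rw [← mul_assoc, ← mul_pow, mul_inv_cancel₀ hθn.ne', one_pow, one_mul]
      _ ≤ (θ*(n:ℝ))^t * ∏ ℓ ∈ range n, ‖c ℓ‖ := this
      _ = ‖∏ ℓ ∈ range n, c ℓ‖ * (θ*(n:ℝ))^t := by rw [norm_prod]; ring
  have hdeg : P.natDegree < n + 1 := by
    have h : P.natDegree ≤ n := by
      rw [hP]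
      refine le_trans (Polynomial.natDegree_prod_le (range n) (fun ℓ => X + C (c ℓ))) ?_
      simp [Polynomial.natDegree_X_add_C]
    omega
  have hentry : ∀ i j, upProd ((γ:ℚ_[p]) • (1 : Matrix (Fin m) (Fin m) ℚ_[p]) + N) n i j =
      ∑ t ∈ range (n+1), P.coeff t * (N^t) i j := by
    intro i j
    rw [upProd_eq_aeval, Polynomial.aeval_eq_sum_range' hdeg, Matrix.sum_apply]
    simp [Matrix.smul_apply, smul_eq_mul]
  have hSU : SUpper N := htri
  have hc0 : P.coeff 0 = ∏ ℓ ∈ range n, c ℓ := by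
    rw [hP, Polynomial.coeff_zero_eq_eval_zero, Polynomial.eval_prod]
    simp
  have hdiag : ∀ i, upProd ((γ:ℚ_[p]) • (1 : Matrix (Fin m) (Fin m) ℚ_[p]) + N) n i i =
      ∏ ℓ ∈ range n, c ℓ := by
    intro i
    rw [hentry i i, Finset.sum_eq_single 0]
    · simp [hc0]
    · intro t _ ht0
      rw [supper_pow hSU t (Nat.one_le_iff_ne_zero.mpr ht0) i i le_rfl, mul_zero]
    · intro h; exact absurd (Finset.mem_range.mpr (Nat.succ_pos n)) h
  have hub : ∀ i j, ‖upProd ((γ:ℚ_[p]) • (1 : Matrix (Fin m) (Fin m) ℚ_[p]) + N) n i j‖ ≤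
      (θ*(n:ℝ))^(m-1) * ‖∏ ℓ ∈ range n, c ℓ‖ := by
    intro i j
    rw [hentry]
    refine padic_sum_norm_le _ _ (by positivity) fun t ht_ => ?_
    by_cases htm : t < m
    · rw [norm_mul]
      have h1 : ‖P.coeff t‖ ≤ ‖∏ ℓ ∈ range n, c ℓ‖ * (θ*(n:ℝ))^t :=
        hcoeff t (by have := Finset.mem_range.mp ht_; omega)
      calc ‖P.coeff t‖ * ‖(N^t) i j‖
          ≤ (‖∏ ℓ ∈ range n, c ℓ‖ * (θ*(n:ℝ))^t) * 1 :=
            mul_le_mul h1 (pow_entry_norm_le hbd t i j) (norm_nonneg _) (by positivity)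
        _ = ‖∏ ℓ ∈ range n, c ℓ‖ * (θ*(n:ℝ))^t := mul_one _
        _ ≤ ‖∏ ℓ ∈ range n, c ℓ‖ * (θ*(n:ℝ))^(m-1) :=
            mul_le_mul_of_nonneg_left (pow_le_pow_right₀ hθn1 (by omega)) (norm_nonneg _)
        _ = (θ*(n:ℝ))^(m-1) * ‖∏ ℓ ∈ range n, c ℓ‖ := mul_comm _ _
    · have hNt : N ^ t = 0 := by
        obtain ⟨s, rfl⟩ := Nat.exists_eq_add_of_le (not_lt.mp htm)
        rw [pow_add, hnil, zero_mul]
      rw [hNt]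
      simp only [Matrix.zero_apply, mul_zero, norm_zero]
      positivity
  obtain ⟨i0⟩ : Nonempty (Fin m) := inferInstance
  constructor
  · have h1 : ‖τ⁻¹ ^ n * ∏ ℓ ∈ range n, c ℓ‖ =
        ‖(τ⁻¹ ^ n • upProd ((γ:ℚ_[p]) • (1 : Matrix (Fin m) (Fin m) ℚ_[p]) + N) n) i0 i0‖ := by
      rw [Matrix.smul_apply, smul_eq_mul, hdiag]
    rw [h1]
    unfold pMatNorm
    exact le_trans
      (Finset.le_sup' (fun j => ‖(τ⁻¹ ^ n • upProd ((γ:ℚ_[p]) • (1 : Matrix (Fin m) (Fin m) ℚ_[p]) + N) n) i0 j‖) (Finset.mem_univ i0))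
      (Finset.le_sup' (fun i => Finset.univ.sup' Finset.univ_nonempty
        (fun j => ‖(τ⁻¹ ^ n • upProd ((γ:ℚ_[p]) • (1 : Matrix (Fin m) (Fin m) ℚ_[p]) + N) n) i j‖))
        (Finset.mem_univ i0))
  · rw [norm_mul]
    refine Finset.sup'_le _ _ fun i _ => Finset.sup'_le _ _ fun j _ => ?_
    rw [Matrix.smul_apply, smul_eq_mul, norm_mul]
    calc ‖τ⁻¹ ^ n‖ * ‖upProd ((γ:ℚ_[p]) • (1 : Matrix (Fin m) (Fin m) ℚ_[p]) + N) n i j‖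
        ≤ ‖τ⁻¹ ^ n‖ * ((θ*(n:ℝ))^(m-1) * ‖∏ ℓ ∈ range n, c ℓ‖) :=
          mul_le_mul_of_nonneg_left (hub i j) (norm_nonneg _)
      _ = (θ*(n:ℝ))^(m-1) * (‖τ⁻¹ ^ n‖ * ‖∏ ℓ ∈ range n, c ℓ‖) := by ring
end
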